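/- Semigroup property of Ψ-fractional integrals: for α, γ > 0 and f continuous on [0,b], I^{γ;Ψ}(I^{α;Ψ} f)(t) = I^{γ+α;Ψ} f(t) for all t ∈ [0,b]. -/

import Mathlib

open Set intervalIntegral
open MeasureTheory Topology Filter

lemma psi_real_beta {α γ : ℝ} (hα : 0 < α) (hγ : 0 < γ) :
    Real.Gamma α * Real.Gamma γ =
      Real.Gamma (α + γ) * ∫ x in (0:ℝ)..1, x ^ (α - 1) * (1 - x) ^ (γ - 1) := by
  have h := Complex.Gamma_mul_Gamma_eq_betaIntegral
      (s := (α:ℂ)) (t := (γ:ℂ)) (by simpa using hα) (by simpa using hγ)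
  have hbeta : Complex.betaIntegral (α:ℂ) (γ:ℂ)
      = ((∫ x in (0:ℝ)..1, x ^ (α - 1) * (1 - x) ^ (γ - 1) : ℝ) : ℂ) := by
    rw [Complex.betaIntegral, ← intervalIntegral.integral_ofReal]
    refine intervalIntegral.integral_congr fun x hx => ?_
    rw [Set.uIcc_of_le zero_le_one] at hx
    rw [show ((α:ℂ) - 1) = ((α - 1 : ℝ) : ℂ) by push_cast; ring,
      show ((γ:ℂ) - 1) = ((γ - 1 : ℝ) : ℂ) by push_cast; ring,
      show (1 - (x:ℂ)) = ((1 - x : ℝ) : ℂ) by push_cast; ring,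
      ← Complex.ofReal_cpow hx.1, ← Complex.ofReal_cpow (by linarith [hx.2] : (0:ℝ) ≤ 1 - x)]
    push_cast
    ring
  rw [hbeta, ← Complex.ofReal_add, Complex.Gamma_ofReal, Complex.Gamma_ofReal,
    Complex.Gamma_ofReal] at h
  exact_mod_cast h

lemma psi_deriv_nonneg {b : ℝ} (hb : 0 < b) {Ψ Ψ' : ℝ → ℝ}
    (hderiv : ∀ x ∈ Icc (0:ℝ) b, HasDerivAt Ψ (Ψ' x) x)
    (hmono : StrictMonoOn Ψ (Icc (0:ℝ) b)) :
    ∀ x ∈ Icc (0:ℝ) b, 0 ≤ Ψ' x := by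
  intro x hx
  rcases lt_or_eq_of_le hx.2 with hxb | hxb
  · have hd : HasDerivWithinAt Ψ (Ψ' x) (Ioo x b) x := (hderiv x hx).hasDerivWithinAt
    have ht := (hasDerivWithinAt_iff_tendsto_slope' (fun h => lt_irrefl x h.1)).mp hd
    haveI hne : (𝓝[Ioo x b] x).NeBot := by
      apply mem_closure_iff_nhdsWithin_neBot.mp
      rw [closure_Ioo (ne_of_lt hxb)]
      exact ⟨le_refl x, le_of_lt hxb⟩
    refine ge_of_tendsto ht ?_
    filter_upwards [self_mem_nhdsWithin] with y hy
    have hxy : x < y := hy.1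
    have h1 : Ψ x < Ψ y := hmono hx ⟨le_trans hx.1 hxy.le, hy.2.le⟩ hxy
    have : 0 < slope Ψ x y := by
      rw [slope_def_field]
      exact div_pos (by linarith) (by linarith)
    linarith
  · have hd : HasDerivWithinAt Ψ (Ψ' x) (Ioo 0 x) x := (hderiv x hx).hasDerivWithinAt
    have ht := (hasDerivWithinAt_iff_tendsto_slope' (fun h => lt_irrefl x h.2)).mp hd
    have hx0 : 0 < x := by rw [← hxb] at hb; exact hb
    haveI hne : (𝓝[Ioo 0 x] x).NeBot := by
      apply mem_closure_iff_nhdsWithin_neBot.mp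
      rw [closure_Ioo (ne_of_lt hx0)]
      exact ⟨hx0.le, le_refl x⟩
    refine ge_of_tendsto ht ?_
    filter_upwards [self_mem_nhdsWithin] with y hy
    have hxy : y < x := hy.2
    have h1 : Ψ y < Ψ x := hmono ⟨hy.1.le, by linarith [hx.2]⟩ hx hxy
    have : 0 < slope Ψ x y := by
      rw [slope_def_field]
      apply div_pos_of_neg_of_neg (by linarith) (by linarith)
    linarith

lemma psi_aux
    (b α γ : ℝ) (hb : 0 < b) (hα : 0 < α) (hγ : 0 < γ)
    (Ψ Ψ' f : ℝ → ℝ)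
    (hΨc : Continuous Ψ) (hΨ'c : Continuous Ψ') (hfc : Continuous f)
    (hderiv : ∀ x ∈ Icc (0:ℝ) b, HasDerivWithinAt Ψ (Ψ' x) (Icc (0:ℝ) b) x)
    (hmono : StrictMonoOn Ψ (Icc (0:ℝ) b))
    (hΨ'pos : ∀ x ∈ Icc (0:ℝ) b, 0 < Ψ' x)
    {t : ℝ} (htpos : 0 < t) (htb : t ≤ b) :
    (1 / Real.Gamma γ) *
        ∫ s in (0:ℝ)..t, Ψ' s * (Ψ t - Ψ s) ^ (γ - 1) *
          ((1 / Real.Gamma α) *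
            ∫ τ in (0:ℝ)..s, Ψ' τ * (Ψ s - Ψ τ) ^ (α - 1) * f τ)
      = (1 / Real.Gamma (γ + α)) *
          ∫ s in (0:ℝ)..t, Ψ' s * (Ψ t - Ψ s) ^ (γ + α - 1) * f s := by
  have ht : t ∈ Icc (0:ℝ) b := ⟨htpos.le, htb⟩
  obtain ⟨xm, hxm, hmin⟩ := isCompact_Icc.exists_isMinOn (nonempty_Icc.mpr hb.le)
    hΨ'c.continuousOn
  obtain ⟨xM, hxM, hmax⟩ := isCompact_Icc.exists_isMaxOn (nonempty_Icc.mpr hb.le)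
    hΨ'c.continuousOn
  set m := Ψ' xm with hm_def
  set M := Ψ' xM with hM_def
  have hm : 0 < m := hΨ'pos xm hxm
  have hM : 0 < M := hΨ'pos xM hxM
  have hmle : ∀ x ∈ Icc (0:ℝ) b, m ≤ Ψ' x := fun x hx => isMinOn_iff.mp hmin x hx
  have hMle : ∀ x ∈ Icc (0:ℝ) b, Ψ' x ≤ M := fun x hx => isMaxOn_iff.mp hmax x hx
  obtain ⟨Cf, hCf⟩ := isCompact_Icc.exists_bound_of_continuousOn (s := Icc (0:ℝ) b)
    hfc.continuousOn
  have hCf0 : 0 ≤ Cf := le_trans (norm_nonneg _) (hCf 0 ⟨le_refl 0, hb.le⟩)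
  -- MVT-style bounds
  have hslope : ∀ x ∈ Icc (0:ℝ) b, ∀ y ∈ Icc (0:ℝ) b, x ≤ y →
      m * (y - x) ≤ Ψ y - Ψ x ∧ Ψ y - Ψ x ≤ M * (y - x) := by
    intro x hx y hy hxy
    constructor
    · have hmono1 : MonotoneOn (fun z => Ψ z - m * z) (Icc (0:ℝ) b) := by
        apply monotoneOn_of_hasDerivWithinAt_nonneg (f' := fun z => Ψ' z - m) (convex_Icc 0 b)
          ((hΨc.sub (continuous_const.mul continuous_id)).continuousOn)
        · intro z hz
          have h1 := (hderiv z (interior_subset hz)).mono interior_subset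
          have h2 : HasDerivWithinAt (fun y => m * y) m (interior (Icc (0:ℝ) b)) z := by
            simpa using ((hasDerivAt_id z).const_mul m).hasDerivWithinAt
          exact h1.sub h2
        · intro z hz
          have := hmle z (interior_subset hz); linarith
      have := hmono1 hx hy hxy
      simp only at this
      linarith
    · have hmono2 : MonotoneOn (fun z => M * z - Ψ z) (Icc (0:ℝ) b) := by
        apply monotoneOn_of_hasDerivWithinAt_nonneg (f' := fun z => M - Ψ' z) (convex_Icc 0 b)
          (((continuous_const.mul continuous_id).sub hΨc).continuousOn)
        · intro z hz
          have h1 := (hderiv z (interior_subset hz)).mono interior_subset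
          have h2 : HasDerivWithinAt (fun y => M * y) M (interior (Icc (0:ℝ) b)) z := by
            simpa using ((hasDerivAt_id z).const_mul M).hasDerivWithinAt
          exact h2.sub h1
        · intro z hz
          have := hMle z (interior_subset hz); linarith
      have := hmono2 hx hy hxy
      simp only at this
      linarith
  -- kernel pointwise bound
  have hkb : ∀ r : ℝ, ∀ x ∈ Icc (0:ℝ) b, ∀ q ∈ Icc (0:ℝ) b, x < q →
      (Ψ q - Ψ x) ^ (r - 1) ≤ (m ^ (r-1) + M ^ (r-1)) * (q - x) ^ (r-1) := by
    intro r x hx q hq hxq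
    obtain ⟨h1, h2⟩ := hslope x hx q hq hxq.le
    have hqx : 0 < q - x := by linarith
    have hmq : 0 < m * (q - x) := by positivity
    have hk1 : (0:ℝ) ≤ (q-x)^(r-1) := Real.rpow_nonneg hqx.le _
    rcases le_or_gt 1 r with hr | hr
    · calc (Ψ q - Ψ x) ^ (r-1) ≤ (M * (q - x)) ^ (r-1) :=
            Real.rpow_le_rpow (by linarith) h2 (by linarith)
        _ = M ^ (r-1) * (q-x) ^ (r-1) := Real.mul_rpow hM.le hqx.le
        _ ≤ _ := by
            have hk2 : (0:ℝ) ≤ m^(r-1) := Real.rpow_nonneg hm.le _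
            nlinarith
    · calc (Ψ q - Ψ x) ^ (r-1) ≤ (m * (q - x)) ^ (r-1) :=
            Real.rpow_le_rpow_of_nonpos hmq h1 (by linarith)
        _ = m ^ (r-1) * (q-x) ^ (r-1) := Real.mul_rpow hm.le hqx.le
        _ ≤ _ := by
            have hk2 : (0:ℝ) ≤ M^(r-1) := Real.rpow_nonneg hM.le _
            nlinarith
  -- reflected rpow integrability
  have hrint : ∀ r : ℝ, -1 < r → ∀ p q : ℝ, p ≤ q →
      IntegrableOn (fun τ => (q - τ) ^ r) (Ioo p q) := by
    intro r hr p q hpq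
    have h1 : IntervalIntegrable (fun x : ℝ => x ^ r) volume (q - p) (q - q) :=
      intervalIntegrable_rpow' hr
    have h2 := h1.comp_sub_left q
    rw [← intervalIntegrable_iff_integrableOn_Ioo_of_le hpq]
    simpa using h2
  -- the main integrability lemma
  have hInt : ∀ r : ℝ, 0 < r → ∀ p q : ℝ, 0 ≤ p → q ≤ b → ∀ h : ℝ → ℝ, Continuous h →
      IntegrableOn (fun τ => Ψ' τ * (Ψ q - Ψ τ) ^ (r-1) * h τ) (Ioo p q) := by
    intro r hr p q hp hq h hc
    rcases le_or_gt q p with hqp | hpq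
    · rw [Ioo_eq_empty (by intro hlt; exact absurd hqp (not_le.mpr hlt))]
      exact integrableOn_empty
    obtain ⟨Ch, hCh⟩ := isCompact_Icc.exists_bound_of_continuousOn (s := Icc (0:ℝ) b)
      hc.continuousOn
    have hCh0 : 0 ≤ Ch := le_trans (norm_nonneg _) (hCh 0 ⟨le_refl 0, hb.le⟩)
    have hsub : Ioo p q ⊆ Icc (0:ℝ) b := fun x hx => ⟨by linarith [hx.1], by linarith [hx.2.le]⟩
    have hqI : q ∈ Icc (0:ℝ) b := ⟨by linarith, hq⟩
    have hdom : IntegrableOn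
        (fun τ => (M * Ch * (m^(r-1)+M^(r-1))) * (q - τ) ^ (r-1)) (Ioo p q) :=
      (hrint (r-1) (by linarith) p q hpq.le).const_mul _
    apply hdom.mono'
    · apply ContinuousOn.aestronglyMeasurable _ measurableSet_Ioo
      apply ContinuousOn.mul (ContinuousOn.mul hΨ'c.continuousOn ?_) hc.continuousOn
      apply ContinuousOn.rpow_const ((continuous_const.sub hΨc).continuousOn)
      intro τ hτ
      left
      have : Ψ τ < Ψ q := hmono (hsub hτ) hqI hτ.2
      exact sub_ne_zero.mpr (ne_of_gt this)
    · filter_upwards [ae_restrict_mem measurableSet_Ioo] with τ hτ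
      have hτI : τ ∈ Icc (0:ℝ) b := hsub hτ
      have hker := hkb r τ hτI q hqI hτ.2
      have hΨpos : 0 < Ψ q - Ψ τ := by
        have := hmono hτI hqI hτ.2; linarith
      have hkerpos : (0:ℝ) ≤ (Ψ q - Ψ τ) ^ (r-1) := Real.rpow_nonneg hΨpos.le _
      rw [Real.norm_eq_abs, abs_mul, abs_mul, abs_of_nonneg (hΨ'pos τ hτI).le,
        abs_of_nonneg hkerpos]
      have e1 : Ψ' τ * (Ψ q - Ψ τ)^(r-1) ≤ M * ((m^(r-1)+M^(r-1)) * (q-τ)^(r-1)) :=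
        mul_le_mul (hMle τ hτI) hker hkerpos hM.le
      have e2 : |h τ| ≤ Ch := by
        have := hCh τ hτI; rwa [Real.norm_eq_abs] at this
      have e3 : 0 ≤ Ψ' τ * (Ψ q - Ψ τ)^(r-1) :=
        mul_nonneg (hΨ'pos τ hτI).le hkerpos
      calc Ψ' τ * (Ψ q - Ψ τ)^(r-1) * |h τ|
          ≤ (M * ((m^(r-1)+M^(r-1)) * (q-τ)^(r-1))) * Ch :=
            mul_le_mul e1 e2 (abs_nonneg _)
              (mul_nonneg hM.le (mul_nonneg
                (add_nonneg (Real.rpow_nonneg hm.le _) (Real.rpow_nonneg hM.le _))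
                (Real.rpow_nonneg (by linarith [hτ.2] : (0:ℝ) ≤ q - τ) _)))
        _ = (M * Ch * (m^(r-1)+M^(r-1))) * (q - τ)^(r-1) := by ring
  set B := ∫ x in (0:ℝ)..1, x ^ (α - 1) * (1 - x) ^ (γ - 1) with hB_def
  have hGid := psi_real_beta hα hγ
  -- kernel evaluation via substitution u = Ψ s
  have hkerval : ∀ τ, 0 ≤ τ → τ < t →
      ∫ s in Ioo τ t, Ψ' s * ((Ψ t - Ψ s) ^ (γ-1) * (Ψ s - Ψ τ) ^ (α-1))
        = (Ψ t - Ψ τ) ^ (α+γ-1) * B := by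
    intro τ hτ0 hτt
    have hτI : τ ∈ Icc (0:ℝ) b := ⟨hτ0, by linarith⟩
    have hsub : Ioo τ t ⊆ Icc (0:ℝ) b := fun x hx => ⟨by linarith [hx.1], by linarith [hx.2.le]⟩
    have himg : Ψ '' Ioo τ t = Ioo (Ψ τ) (Ψ t) := by
      apply Subset.antisymm
      · rintro y ⟨x, hxmem, rfl⟩
        exact ⟨hmono hτI (hsub hxmem) hxmem.1, hmono (hsub hxmem) ht hxmem.2⟩
      · exact intermediate_value_Ioo hτt.le hΨc.continuousOn
    have hsubst := integral_image_eq_integral_abs_deriv_smul measurableSet_Ioo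
        (fun x hx => ((hderiv x (hsub hx)).mono hsub)) (hmono.injOn.mono hsub)
        (fun u => (Ψ t - u) ^ (γ-1) * (u - Ψ τ) ^ (α-1))
    rw [himg] at hsubst
    have heq : ∀ s ∈ Ioo τ t, |Ψ' s| • ((Ψ t - Ψ s) ^ (γ-1) * (Ψ s - Ψ τ) ^ (α-1))
        = Ψ' s * ((Ψ t - Ψ s) ^ (γ-1) * (Ψ s - Ψ τ) ^ (α-1)) := fun s hs => by
      rw [smul_eq_mul, abs_of_nonneg (hΨ'pos s (hsub hs)).le]
    rw [setIntegral_congr_fun measurableSet_Ioo heq] at hsubst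
    rw [← hsubst]
    have hΨlt : Ψ τ < Ψ t := hmono hτI ht hτt
    set c := Ψ t - Ψ τ with hc_def
    have hc : 0 < c := by simp only [hc_def]; linarith
    rw [← integral_Ioc_eq_integral_Ioo, ← intervalIntegral.integral_of_le hΨlt.le]
    have e1 : c * 0 + Ψ τ = Ψ τ := by ring
    have e2 : c * 1 + Ψ τ = Ψ t := by rw [hc_def]; ring
    have key := intervalIntegral.smul_integral_comp_mul_add (a := (0:ℝ)) (b := 1)
        (fun u => (Ψ t - u) ^ (γ-1) * (u - Ψ τ) ^ (α-1)) c (Ψ τ)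
    rw [e1, e2] at key
    rw [← key]
    have congr1 : ∫ x in (0:ℝ)..1, (Ψ t - (c*x + Ψ τ)) ^ (γ-1) * ((c*x + Ψ τ) - Ψ τ) ^ (α-1)
        = ∫ x in (0:ℝ)..1, (c ^ (γ-1) * c ^ (α-1)) * (x ^ (α-1) * (1-x) ^ (γ-1)) := by
      apply intervalIntegral.integral_congr
      intro x hx
      rw [uIcc_of_le zero_le_one] at hx
      have h1 : Ψ t - (c*x + Ψ τ) = c * (1 - x) := by rw [hc_def]; ring
      have h2 : c*x + Ψ τ - Ψ τ = c * x := by ring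
      simp only [h1, h2]
      rw [Real.mul_rpow hc.le (by linarith [hx.2] : (0:ℝ) ≤ 1 - x),
        Real.mul_rpow hc.le hx.1]
      ring
    beta_reduce at congr1 ⊢
    rw [congr1, intervalIntegral.integral_const_mul, smul_eq_mul, ← hB_def]
    rw [show c * (c ^ (γ-1) * c ^ (α-1) * B) = (c * (c ^ (γ-1) * c ^ (α-1))) * B by ring]
    congr 1
    rw [← Real.rpow_add hc, show c * c ^ (γ - 1 + (α-1)) = c ^ (1:ℝ) * c ^ (γ-1+(α-1)) by
      rw [Real.rpow_one], ← Real.rpow_add hc]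
    congr 1
    ring
  -- Fubini
  set W : ℝ → ℝ → ℝ := fun s τ => Ψ' s * (Ψ t - Ψ s) ^ (γ-1) *
      (Ψ' τ * (Ψ s - Ψ τ) ^ (α-1) * f τ) with hW_def
  set T : Set (ℝ × ℝ) := {p | 0 < p.2 ∧ p.2 < p.1 ∧ p.1 < t} with hT_def
  have hTopen : IsOpen T :=
    (isOpen_lt continuous_const continuous_snd).inter
      ((isOpen_lt continuous_snd continuous_fst).inter
        (isOpen_lt continuous_fst continuous_const))
  have hTsub : ∀ p : ℝ × ℝ, p ∈ T → p.1 ∈ Icc (0:ℝ) b ∧ p.2 ∈ Icc (0:ℝ) b := by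
    intro p hp
    obtain ⟨h1, h2, h3⟩ := hp
    exact ⟨⟨by linarith, by linarith⟩, ⟨by linarith, by linarith⟩⟩
  set F : ℝ → ℝ → ℝ := fun s τ => T.indicator (fun p => W p.1 p.2) (s, τ) with hF_def
  have hFunc : Function.uncurry F = T.indicator (fun p => W p.1 p.2) := by
    funext p
    simp only [Function.uncurry, hF_def]
  have hWcont : ContinuousOn (fun p : ℝ × ℝ => W p.1 p.2) T := by
    simp only [hW_def]
    apply ContinuousOn.mul
    · apply ContinuousOn.mul (hΨ'c.comp continuous_fst).continuousOn
      apply ContinuousOn.rpow_const (continuous_const.sub (hΨc.comp continuous_fst)).continuousOn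
      intro p hp
      left
      have := hmono (hTsub p hp).1 ht hp.2.2
      exact sub_ne_zero.mpr (ne_of_gt this)
    · apply ContinuousOn.mul
      · apply ContinuousOn.mul (hΨ'c.comp continuous_snd).continuousOn
        apply ContinuousOn.rpow_const
          ((hΨc.comp continuous_fst).sub (hΨc.comp continuous_snd)).continuousOn
        intro p hp
        left
        have := hmono (hTsub p hp).2 (hTsub p hp).1 hp.2.1
        exact sub_ne_zero.mpr (ne_of_gt this)
      · exact (hfc.comp continuous_snd).continuousOn
  have hFm : AEStronglyMeasurable (Function.uncurry F) ((volume : Measure ℝ).prod volume) := by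
    rw [hFunc]
    exact (aestronglyMeasurable_indicator_iff hTopen.measurableSet).mpr
      (hWcont.aestronglyMeasurable hTopen.measurableSet)
  have hFs_in : ∀ s ∈ Ioo (0:ℝ) t, (fun τ => F s τ) = (Ioo (0:ℝ) s).indicator (fun τ => W s τ) := by
    intro s hs
    funext τ
    by_cases hτ : τ ∈ Ioo (0:ℝ) s
    · rw [indicator_of_mem hτ]
      exact indicator_of_mem (show (s,τ) ∈ T from ⟨hτ.1, hτ.2, hs.2⟩) _
    · rw [indicator_of_notMem hτ]
      refine indicator_of_notMem (fun hmem => hτ ⟨hmem.1, hmem.2.1⟩) _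
  have hFs_out : ∀ s, s ∉ Ioo (0:ℝ) t → ∀ τ, F s τ = 0 := by
    intro s hs τ
    refine indicator_of_notMem (fun hmem => hs ⟨lt_trans hmem.1 hmem.2.1, hmem.2.2⟩) _
  have hFτ_in : ∀ τ ∈ Ioo (0:ℝ) t, (fun s => F s τ) = (Ioo τ t).indicator (fun s => W s τ) := by
    intro τ hτ
    funext s
    by_cases hs : s ∈ Ioo τ t
    · rw [indicator_of_mem hs]
      exact indicator_of_mem (show (s,τ) ∈ T from ⟨hτ.1, hs.1, hs.2⟩) _
    · rw [indicator_of_notMem hs]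
      refine indicator_of_notMem (fun hmem => hs ⟨hmem.2.1, hmem.2.2⟩) _
  have hFτ_out : ∀ τ, τ ∉ Ioo (0:ℝ) t → ∀ s, F s τ = 0 := by
    intro τ hτ s
    refine indicator_of_notMem (fun hmem => hτ ⟨hmem.1, lt_trans hmem.2.1 hmem.2.2⟩) _
  have hWInt : ∀ s ∈ Ioo (0:ℝ) t, IntegrableOn (fun τ => W s τ) (Ioo 0 s) := by
    intro s hs
    exact (hInt α hα 0 s le_rfl (by linarith [hs.2]) f hfc).const_mul _
  have hF1 : ∀ s, Integrable (fun τ => F s τ) volume := by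
    intro s
    by_cases hs : s ∈ Ioo (0:ℝ) t
    · rw [hFs_in s hs, integrable_indicator_iff measurableSet_Ioo]
      exact hWInt s hs
    · have : (fun τ => F s τ) = fun _ => 0 := funext (hFs_out s hs)
      rw [this]
      exact integrable_zero _ _ _
  -- bound for the inner integral
  set CK := Cf * M * (m ^ (α-1) + M ^ (α-1)) with hCK_def
  have hCK0 : 0 ≤ CK := by
    have := Real.rpow_nonneg hm.le (α-1)
    have := Real.rpow_nonneg hM.le (α-1)
    simp only [hCK_def]
    positivity
  set D := CK * (t ^ α / α) with hD_def
  have hD0 : 0 ≤ D := by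
    have : (0:ℝ) ≤ t ^ α := Real.rpow_nonneg htpos.le _
    simp only [hD_def]
    positivity
  have hrval : ∀ s : ℝ, 0 ≤ s → ∫ τ in Ioo (0:ℝ) s, (s - τ) ^ (α-1) = s ^ α / α := by
    intro s hs0
    rw [← integral_Ioc_eq_integral_Ioo, ← intervalIntegral.integral_of_le hs0,
      intervalIntegral.integral_comp_sub_left (fun x => x ^ (α-1)) s]
    simp only [sub_self, sub_zero]
    rw [integral_rpow (Or.inl (by linarith))]
    rw [show α - 1 + 1 = α by ring, Real.zero_rpow hα.ne']
    ring
  have hinner_bound : ∀ s ∈ Ioo (0:ℝ) t,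
      ∫ τ in Ioo (0:ℝ) s, ‖Ψ' τ * (Ψ s - Ψ τ) ^ (α-1) * f τ‖ ≤ D := by
    intro s hs
    have hsI : s ∈ Icc (0:ℝ) b := ⟨hs.1.le, by linarith [hs.2]⟩
    have hsub : Ioo (0:ℝ) s ⊆ Icc (0:ℝ) b := fun x hx =>
      ⟨hx.1.le, by linarith [hx.2.le, hs.2]⟩
    have hb1 : ∀ τ ∈ Ioo (0:ℝ) s,
        ‖Ψ' τ * (Ψ s - Ψ τ) ^ (α-1) * f τ‖ ≤ CK * (s - τ) ^ (α-1) := by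
      intro τ hτ
      have hτI : τ ∈ Icc (0:ℝ) b := hsub hτ
      have hker := hkb α τ hτI s hsI hτ.2
      have hΨpos : 0 < Ψ s - Ψ τ := by
        have := hmono hτI hsI hτ.2; linarith
      have hkerpos : (0:ℝ) ≤ (Ψ s - Ψ τ) ^ (α-1) := Real.rpow_nonneg hΨpos.le _
      rw [Real.norm_eq_abs, abs_mul, abs_mul, abs_of_nonneg (hΨ'pos τ hτI).le,
        abs_of_nonneg hkerpos]
      have e1 : Ψ' τ * (Ψ s - Ψ τ) ^ (α-1) ≤ M * ((m^(α-1)+M^(α-1)) * (s-τ)^(α-1)) :=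
        mul_le_mul (hMle τ hτI) hker hkerpos hM.le
      have e2 : |f τ| ≤ Cf := by
        have := hCf τ hτI; rwa [Real.norm_eq_abs] at this
      calc Ψ' τ * (Ψ s - Ψ τ) ^ (α-1) * |f τ|
          ≤ (M * ((m^(α-1)+M^(α-1)) * (s-τ)^(α-1))) * Cf :=
            mul_le_mul e1 e2 (abs_nonneg _)
              (mul_nonneg hM.le (mul_nonneg
                (add_nonneg (Real.rpow_nonneg hm.le _) (Real.rpow_nonneg hM.le _))
                (Real.rpow_nonneg (by linarith [hτ.2] : (0:ℝ) ≤ s - τ) _)))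
        _ = CK * (s - τ) ^ (α-1) := by rw [hCK_def]; ring
    calc ∫ τ in Ioo (0:ℝ) s, ‖Ψ' τ * (Ψ s - Ψ τ) ^ (α-1) * f τ‖
        ≤ ∫ τ in Ioo (0:ℝ) s, CK * (s - τ) ^ (α-1) := by
          apply setIntegral_mono_on ((hInt α hα 0 s le_rfl (by linarith [hs.2]) f hfc).norm)
            ((hrint (α-1) (by linarith) 0 s hs.1.le).const_mul CK) measurableSet_Ioo hb1
      _ = CK * (s ^ α / α) := by rw [MeasureTheory.integral_const_mul, hrval s hs.1.le]
      _ ≤ CK * (t ^ α / α) := by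
          apply mul_le_mul_of_nonneg_left _ hCK0
          exact (div_le_div_iff_of_pos_right hα).mpr
            (Real.rpow_le_rpow hs.1.le (by linarith [hs.2]) hα.le)
      _ = D := hD_def.symm
  have hF2 : Integrable (fun s => ∫ τ, ‖F s τ‖) volume := by
    have hmeas : AEStronglyMeasurable (fun s => ∫ τ, ‖F s τ‖) volume := by
      have := hFm.norm.integral_prod_right'
      simpa [Function.uncurry] using this
    apply Integrable.mono'
      (g := (Ioo (0:ℝ) t).indicator (fun s => Ψ' s * (Ψ t - Ψ s) ^ (γ-1) * D)) ?_ hmeas ?_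
    · rw [integrable_indicator_iff measurableSet_Ioo]
      exact hInt γ hγ 0 t le_rfl htb (fun _ => D) continuous_const
    · apply ae_of_all
      intro s
      by_cases hs : s ∈ Ioo (0:ℝ) t
      · rw [indicator_of_mem hs]
        have hsI : s ∈ Icc (0:ℝ) b := ⟨hs.1.le, by linarith [hs.2]⟩
        have hΨpos : 0 < Ψ t - Ψ s := by have := hmono hsI ht hs.2; linarith
        have hCs : 0 ≤ Ψ' s * (Ψ t - Ψ s) ^ (γ-1) :=
          mul_nonneg (hΨ'pos s hsI).le (Real.rpow_nonneg hΨpos.le _)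
        have h1 : ∫ τ, ‖F s τ‖ = ∫ τ in Ioo (0:ℝ) s, ‖W s τ‖ := by
          simp_rw [congrFun (hFs_in s hs), norm_indicator_eq_indicator_norm]
          rw [MeasureTheory.integral_indicator measurableSet_Ioo]
        have h2 : ∫ τ in Ioo (0:ℝ) s, ‖W s τ‖
            = (Ψ' s * (Ψ t - Ψ s) ^ (γ-1)) *
              ∫ τ in Ioo (0:ℝ) s, ‖Ψ' τ * (Ψ s - Ψ τ) ^ (α-1) * f τ‖ := by
          rw [← MeasureTheory.integral_const_mul]
          apply setIntegral_congr_fun measurableSet_Ioo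
          intro τ hτ
          simp only [hW_def]
          rw [norm_mul, Real.norm_eq_abs (r := Ψ' s * (Ψ t - Ψ s) ^ (γ-1)),
            abs_of_nonneg hCs]
        have h3 := hinner_bound s hs
        have hnn : 0 ≤ ∫ τ, ‖F s τ‖ := integral_nonneg (fun τ => norm_nonneg _)
        rw [Real.norm_eq_abs, abs_of_nonneg hnn, h1, h2]
        exact mul_le_mul_of_nonneg_left h3 hCs
      · rw [indicator_of_notMem hs]
        simp [hFs_out s hs]
  have hFInt : Integrable (Function.uncurry F) ((volume : Measure ℝ).prod volume) := by
    rw [integrable_prod_iff hFm]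
    exact ⟨ae_of_all _ (fun s => hF1 s), hF2⟩
  have hswap := integral_integral_swap (f := F) hFInt
  have hLHSval : (∫ s, ∫ τ, F s τ) = ∫ s in Ioo (0:ℝ) t, ∫ τ in Ioo (0:ℝ) s, W s τ := by
    have heq : (fun s => ∫ τ, F s τ)
        = (Ioo (0:ℝ) t).indicator (fun s => ∫ τ in Ioo (0:ℝ) s, W s τ) := by
      funext s
      by_cases hs : s ∈ Ioo (0:ℝ) t
      · rw [indicator_of_mem hs, hFs_in s hs, MeasureTheory.integral_indicator measurableSet_Ioo]
      · rw [indicator_of_notMem hs]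
        simp [hFs_out s hs]
    rw [heq, MeasureTheory.integral_indicator measurableSet_Ioo]
  have hRHSval : (∫ τ, ∫ s, F s τ)
      = B * ∫ τ in Ioo (0:ℝ) t, Ψ' τ * (Ψ t - Ψ τ) ^ (α+γ-1) * f τ := by
    have heq : (fun τ => ∫ s, F s τ)
        = (Ioo (0:ℝ) t).indicator (fun τ => B * (Ψ' τ * (Ψ t - Ψ τ) ^ (α+γ-1) * f τ)) := by
      funext τ
      by_cases hτ : τ ∈ Ioo (0:ℝ) t
      · rw [indicator_of_mem hτ, hFτ_in τ hτ, MeasureTheory.integral_indicator measurableSet_Ioo]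
        have hcg : ∀ s ∈ Ioo τ t, W s τ
            = (Ψ' τ * f τ) * (Ψ' s * ((Ψ t - Ψ s) ^ (γ-1) * (Ψ s - Ψ τ) ^ (α-1))) := by
          intro s hsmem
          simp only [hW_def]
          ring
        rw [setIntegral_congr_fun measurableSet_Ioo hcg, MeasureTheory.integral_const_mul,
          hkerval τ hτ.1.le hτ.2]
        ring
      · rw [indicator_of_notMem hτ]
        simp [hFτ_out τ hτ]
    rw [heq, MeasureTheory.integral_indicator measurableSet_Ioo, ← MeasureTheory.integral_const_mul]
  have hLHS2 : (∫ s in (0:ℝ)..t, Ψ' s * (Ψ t - Ψ s) ^ (γ - 1) *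
        ((1 / Real.Gamma α) * ∫ τ in (0:ℝ)..s, Ψ' τ * (Ψ s - Ψ τ) ^ (α - 1) * f τ))
      = (1 / Real.Gamma α) * ∫ s in Ioo (0:ℝ) t, ∫ τ in Ioo (0:ℝ) s, W s τ := by
    rw [intervalIntegral.integral_of_le htpos.le, integral_Ioc_eq_integral_Ioo,
      ← MeasureTheory.integral_const_mul]
    apply setIntegral_congr_fun measurableSet_Ioo
    intro s hs
    beta_reduce
    have hW2 : ∫ τ in Ioo (0:ℝ) s, W s τ
        = (Ψ' s * (Ψ t - Ψ s) ^ (γ-1)) *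
          ∫ τ in Ioo (0:ℝ) s, Ψ' τ * (Ψ s - Ψ τ) ^ (α-1) * f τ := by
      simp only [hW_def]
      rw [MeasureTheory.integral_const_mul]
    rw [intervalIntegral.integral_of_le hs.1.le, integral_Ioc_eq_integral_Ioo, hW2]
    ring
  rw [hLHS2, intervalIntegral.integral_of_le htpos.le, integral_Ioc_eq_integral_Ioo,
    show γ + α - 1 = α + γ - 1 by ring, show Real.Gamma (γ + α) = Real.Gamma (α + γ) by
      rw [add_comm]]
  set R := ∫ τ in Ioo (0:ℝ) t, Ψ' τ * (Ψ t - Ψ τ) ^ (α+γ-1) * f τ with hR_def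
  have hkey : ∫ s in Ioo (0:ℝ) t, ∫ τ in Ioo (0:ℝ) s, W s τ = B * R := by
    rw [← hLHSval, hswap, hRHSval]
  rw [hkey]
  have hΓα := Real.Gamma_pos_of_pos hα
  have hΓγ := Real.Gamma_pos_of_pos hγ
  have hΓαγ := Real.Gamma_pos_of_pos (by linarith : 0 < α + γ)
  rw [← hB_def] at hGid
  field_simp
  linear_combination (-R) * hGid
/-- semigroup property of Ψ-fractional integrals,
`I^{γ;Ψ}(I^{α;Ψ}f) = I^{γ+α;Ψ}f`. -/
theorem psi_fracInt_semigroup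
    (b α γ : ℝ) (hb : 0 < b) (hα : 0 < α) (hγ : 0 < γ)
    (Ψ Ψ' : ℝ → ℝ)
    (hderiv : ∀ x ∈ Set.Icc (0:ℝ) b, HasDerivAt Ψ (Ψ' x) x)
    (hΨ'cont : ContinuousOn Ψ' (Set.Icc (0:ℝ) b))
    (hmono : StrictMonoOn Ψ (Set.Icc (0:ℝ) b))
    (hΨ'ne : ∀ x ∈ Set.Icc (0:ℝ) b, Ψ' x ≠ 0)
    (f : ℝ → ℝ) (hf : ContinuousOn f (Set.Icc (0:ℝ) b)) :
    ∀ t ∈ Set.Icc (0:ℝ) b,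
      (1 / Real.Gamma γ) *
          ∫ s in (0:ℝ)..t, Ψ' s * (Ψ t - Ψ s) ^ (γ - 1) *
            ((1 / Real.Gamma α) *
              ∫ τ in (0:ℝ)..s, Ψ' τ * (Ψ s - Ψ τ) ^ (α - 1) * f τ)
        = (1 / Real.Gamma (γ + α)) *
            ∫ s in (0:ℝ)..t, Ψ' s * (Ψ t - Ψ s) ^ (γ + α - 1) * f s := by
  intro t ht
  rcases eq_or_lt_of_le ht.1 with h0 | htpos
  · rw [← h0]
    simp
  have hΨ'nonneg := psi_deriv_nonneg hb hderiv hmono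
  have hΨ'pos : ∀ x ∈ Icc (0:ℝ) b, 0 < Ψ' x := fun x hx =>
    lt_of_le_of_ne (hΨ'nonneg x hx) (Ne.symm (hΨ'ne x hx))
  set π : ℝ → ℝ := fun x => min b (max 0 x) with hπ_def
  have hπc : Continuous π := continuous_const.min (continuous_const.max continuous_id)
  have hπmem : ∀ x, π x ∈ Icc (0:ℝ) b := fun x =>
    ⟨le_min hb.le (le_max_left 0 x), min_le_left _ _⟩
  have hπid : ∀ x ∈ Icc (0:ℝ) b, π x = x := fun x hx => by
    simp only [hπ_def]
    rw [max_eq_right hx.1, min_eq_right hx.2]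
  have hΨcont : ContinuousOn Ψ (Icc (0:ℝ) b) := fun x hx =>
    (hderiv x hx).continuousAt.continuousWithinAt
  have hc1 : Continuous (fun x => Ψ (π x)) := hΨcont.comp_continuous hπc hπmem
  have hc2 : Continuous (fun x => Ψ' (π x)) := hΨ'cont.comp_continuous hπc hπmem
  have hc3 : Continuous (fun x => f (π x)) := hf.comp_continuous hπc hπmem
  have hd : ∀ x ∈ Icc (0:ℝ) b,
      HasDerivWithinAt (fun x => Ψ (π x)) (Ψ' (π x)) (Icc (0:ℝ) b) x := by
    intro x hx
    have h1 : HasDerivWithinAt Ψ (Ψ' x) (Icc (0:ℝ) b) x := (hderiv x hx).hasDerivWithinAt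
    have h2 : Set.EqOn (fun x => Ψ (π x)) Ψ (Icc (0:ℝ) b) := fun y hy => by
      simp only
      rw [hπid y hy]
    have h3 := h1.congr h2 (h2 hx)
    rw [hπid x hx]
    exact h3
  have hsm : StrictMonoOn (fun x => Ψ (π x)) (Icc (0:ℝ) b) := by
    intro x hx y hy hxy
    simp only
    rw [hπid x hx, hπid y hy]
    exact hmono hx hy hxy
  have hpos : ∀ x ∈ Icc (0:ℝ) b, 0 < Ψ' (π x) := fun x hx => by
    rw [hπid x hx]
    exact hΨ'pos x hx
  have haux := psi_aux b α γ hb hα hγ (fun x => Ψ (π x)) (fun x => Ψ' (π x))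
    (fun x => f (π x)) hc1 hc2 hc3 hd hsm hpos htpos ht.2
  have hL : (∫ s in (0:ℝ)..t, Ψ' s * (Ψ t - Ψ s) ^ (γ - 1) *
        ((1 / Real.Gamma α) * ∫ τ in (0:ℝ)..s, Ψ' τ * (Ψ s - Ψ τ) ^ (α - 1) * f τ))
      = ∫ s in (0:ℝ)..t, Ψ' (π s) * (Ψ (π t) - Ψ (π s)) ^ (γ - 1) *
        ((1 / Real.Gamma α) *
          ∫ τ in (0:ℝ)..s, Ψ' (π τ) * (Ψ (π s) - Ψ (π τ)) ^ (α - 1) * f (π τ)) := by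
    apply intervalIntegral.integral_congr
    intro s hs
    rw [uIcc_of_le ht.1] at hs
    have hsI : s ∈ Icc (0:ℝ) b := ⟨hs.1, hs.2.trans ht.2⟩
    beta_reduce
    rw [hπid s hsI, hπid t ht]
    have hinner : (∫ τ in (0:ℝ)..s, Ψ' τ * (Ψ s - Ψ τ) ^ (α - 1) * f τ)
        = ∫ τ in (0:ℝ)..s, Ψ' (π τ) * (Ψ s - Ψ (π τ)) ^ (α - 1) * f (π τ) := by
      apply intervalIntegral.integral_congr
      intro τ hτ
      rw [uIcc_of_le hs.1] at hτ
      have hτI : τ ∈ Icc (0:ℝ) b := ⟨hτ.1, hτ.2.trans hsI.2⟩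
      beta_reduce
      rw [hπid τ hτI]
    rw [hinner]
  have hR : (∫ s in (0:ℝ)..t, Ψ' s * (Ψ t - Ψ s) ^ (γ + α - 1) * f s)
      = ∫ s in (0:ℝ)..t, Ψ' (π s) * (Ψ (π t) - Ψ (π s)) ^ (γ + α - 1) * f (π s) := by
    apply intervalIntegral.integral_congr
    intro s hs
    rw [uIcc_of_le ht.1] at hs
    have hsI : s ∈ Icc (0:ℝ) b := ⟨hs.1, hs.2.trans ht.2⟩
    beta_reduce
    rw [hπid s hsI, hπid t ht]
  rw [hL, hR]
  exact haux
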